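/- Let M ∈ {1,…,n}. For every y ∈ P_{A_n} there exists an LU(M)-triangular n×n real matrix T with T_{ij} = 0 whenever |i−j| > 1, such that y = T·Tᵀ. -/

import Mathlib

open Matrix

noncomputable section

/-- Tridiagonal symmetric real `n × n` matrices (the space `Z_G` for `G = A_n`). -/
def ZG (n : ℕ) : Set (Matrix (Fin n) (Fin n) ℝ) :=
  {y | y.IsSymm ∧ ∀ i j : Fin n, ((i : ℕ) + 1 < (j : ℕ) ∨ (j : ℕ) + 1 < (i : ℕ)) → y i j = 0}

/-- The cone `P_G` of positive definite matrices in `Z_G`. -/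
def PG (n : ℕ) : Set (Matrix (Fin n) (Fin n) ℝ) :=
  {y | y ∈ ZG n ∧ y.PosDef}

/-- A matrix `T` is LU(M)-triangular (`M` is `1`-based, entries are `0`-based): `T_{ij} = 0`
whenever (`i < M` and `j > i`) or (`i > M` and `j < i`), in `1`-based indexing. -/
def IsLU (n M : ℕ) (T : Matrix (Fin n) (Fin n) ℝ) : Prop :=
  ∀ i j : Fin n,
    (((i : ℕ) + 1 < M ∧ (i : ℕ) < (j : ℕ)) ∨ (M < (i : ℕ) + 1 ∧ (j : ℕ) < (i : ℕ))) →
      T i j = 0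

-- rev transfer of PG membership
lemma revPG (n : ℕ) (y : Matrix (Fin n) (Fin n) ℝ) (hy : y ∈ PG n) :
    y.submatrix Fin.rev Fin.rev ∈ PG n := by
  obtain ⟨⟨hsym, htri⟩, hpd⟩ := hy
  refine ⟨⟨?_, ?_⟩, Matrix.PosDef.of_dotProduct_mulVec_pos ?_ ?_⟩
  · show _ᵀ = _
    rw [transpose_submatrix, hsym]
  · intro i j h
    apply htri
    have hi := i.isLt; have hj := j.isLt
    simp only [Fin.val_rev]
    omega
  · show _ᴴ = _
    rw [conjTranspose_submatrix, hpd.1]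
  · intro x hx
    have hx' : x ∘ Fin.rev ≠ 0 := by
      intro h
      apply hx
      funext i
      have := congrFun h i.rev
      simpa [Fin.rev_rev] using this
    have := hpd.dotProduct_mulVec_pos hx'
    have he : y.submatrix Fin.rev Fin.rev = y.submatrix (⇑(Fin.revPerm (n := n))) (⇑Fin.revPerm) := rfl
    rw [he, submatrix_mulVec_equiv]
    have hsymm : (Fin.revPerm (n:=n)).symm = Fin.revPerm := Fin.revPerm_symm
    rw [hsymm]
    have hcomp : (x ∘ ⇑(Fin.revPerm (n:=n))) = x ∘ Fin.rev := rfl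
    rw [hcomp]
    set w := y *ᵥ (x ∘ Fin.rev) with hw
    have hdp : star x ⬝ᵥ (w ∘ ⇑(Fin.revPerm (n:=n))) = star (x ∘ Fin.rev) ⬝ᵥ w := by
      simp only [dotProduct, Function.comp_apply, Pi.star_apply, star_trivial]
      exact Fintype.sum_bijective Fin.rev Fin.rev_involutive.bijective _ _
        (fun i => by simp [Fin.rev_rev, Fin.revPerm])
    rw [hdp]
    exact this

-- transfer a solution for the reversed matrix back
lemma revTransfer (n M : ℕ) (hM1 : 1 ≤ M) (hMn : M ≤ n)
    (y : Matrix (Fin n) (Fin n) ℝ)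
    (h : ∃ T : Matrix (Fin n) (Fin n) ℝ, IsLU n (n + 1 - M) T ∧
      (∀ i j : Fin n, ((i : ℕ) + 1 < (j : ℕ) ∨ (j : ℕ) + 1 < (i : ℕ)) → T i j = 0) ∧
      y.submatrix Fin.rev Fin.rev = T * Tᵀ) :
    ∃ T : Matrix (Fin n) (Fin n) ℝ, IsLU n M T ∧
      (∀ i j : Fin n, ((i : ℕ) + 1 < (j : ℕ) ∨ (j : ℕ) + 1 < (i : ℕ)) → T i j = 0) ∧
      y = T * Tᵀ := by
  obtain ⟨T, hLU, htri, hfac⟩ := h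
  refine ⟨T.submatrix Fin.rev Fin.rev, ?_, ?_, ?_⟩
  · intro i j hc
    apply hLU
    have hi := i.isLt; have hj := j.isLt
    simp only [Fin.val_rev]
    omega
  · intro i j hc
    apply htri
    have hi := i.isLt; have hj := j.isLt
    simp only [Fin.val_rev]
    omega
  · have : y = (T * Tᵀ).submatrix Fin.rev Fin.rev := by
      rw [← hfac]
      ext i j
      simp [Fin.rev_rev]
    rw [this]
    have hb : Function.Bijective (Fin.rev : Fin n → Fin n) := Fin.rev_involutive.bijective
    rw [submatrix_mul _ _ _ _ _ hb, transpose_submatrix]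

lemma peel (n M : ℕ) (hn : 1 ≤ n) (hM : 2 ≤ M) (hMn : M ≤ n + 1)
    (IH : ∀ y' ∈ PG n, ∃ T' : Matrix (Fin n) (Fin n) ℝ, IsLU n (M - 1) T' ∧
      (∀ i j : Fin n, ((i : ℕ) + 1 < (j : ℕ) ∨ (j : ℕ) + 1 < (i : ℕ)) → T' i j = 0) ∧
      y' = T' * T'ᵀ)
    (y : Matrix (Fin (n + 1)) (Fin (n + 1)) ℝ) (hy : y ∈ PG (n + 1)) :
    ∃ T : Matrix (Fin (n + 1)) (Fin (n + 1)) ℝ, IsLU (n + 1) M T ∧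
      (∀ i j : Fin (n + 1), ((i : ℕ) + 1 < (j : ℕ) ∨ (j : ℕ) + 1 < (i : ℕ)) → T i j = 0) ∧
      y = T * Tᵀ := by
  obtain ⟨⟨hsym, htri⟩, hpd⟩ := hy
  set i0 : Fin n := ⟨0, hn⟩ with hi0
  set z0 : Fin (n + 1) := 0 with hz0
  set a : ℝ := y z0 z0 with ha_def
  set c : ℝ := y z0 i0.succ with hc_def
  have hsymE : ∀ i j, y i j = y j i := fun i j => by
    conv_lhs => rw [← hsym]
    rfl
  have ha : 0 < a := by
    have hne : (Pi.single z0 1 : Fin (n+1) → ℝ) ≠ 0 := by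
      intro h
      have := congrFun h z0
      simp [Pi.single_apply] at this
    have := hpd.dotProduct_mulVec_pos hne
    simpa [dotProduct, mulVec, Pi.single_apply, Finset.mul_sum, mul_comm] using this
  have has : Real.sqrt a ≠ 0 := by positivity
  have hsq : Real.sqrt a * Real.sqrt a = a := Real.mul_self_sqrt ha.le
  -- the Schur complement matrix
  set y' : Matrix (Fin n) (Fin n) ℝ :=
    Matrix.of (fun i j => y i.succ j.succ - (if i = i0 ∧ j = i0 then c ^ 2 / a else 0))
    with hy'_def
  -- row-0 tridiagonality
  have hrow0 : ∀ j : Fin n, y z0 j.succ = (if j = i0 then c else 0) := by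
    intro j
    by_cases h : j = i0
    · simp [h, hc_def]
    · have : (j : ℕ) ≠ 0 := fun h0 => h (Fin.ext h0)
      rw [if_neg h]
      exact htri _ _ (by simp [hz0]; omega)
  have hy'sym : ∀ i j : Fin n, y' i j = y' j i := by
    intro i j
    simp only [hy'_def, Matrix.of_apply]
    rw [hsymE i.succ j.succ]
    congr 1
    by_cases h1 : i = i0 <;> by_cases h2 : j = i0 <;> simp [h1, h2]
  have hy'mem : y' ∈ PG n := by
    refine ⟨⟨?_, ?_⟩, Matrix.PosDef.of_dotProduct_mulVec_pos ?_ ?_⟩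
    · ext i j
      exact hy'sym j i
    · intro i j h
      simp only [hy'_def, Matrix.of_apply]
      have hij : ¬ (i = i0 ∧ j = i0) := by
        rintro ⟨rfl, rfl⟩
        omega
      rw [if_neg hij, htri i.succ j.succ (by simp only [Fin.val_succ]; omega)]
      ring
    · show y'ᴴ = y'
      ext i j
      rw [conjTranspose_apply, star_trivial]
      exact hy'sym j i
    · intro x hx
      set x0 : ℝ := x i0 with hx0
      set t : ℝ := -(c * x0) / a with ht
      set xt : Fin (n + 1) → ℝ := Fin.cons t x with hxt_def
      have hxt : xt ≠ 0 := by
        intro h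
        apply hx
        funext j
        have := congrFun h j.succ
        simpa [hxt_def] using this
      have hstar : ∀ (m : ℕ) (v : Fin m → ℝ), star v = v := fun m v => star_trivial v
      have hrowsum : ∀ i : Fin n, (∑ j : Fin n, y' i j * x j)
          = (∑ j : Fin n, y i.succ j.succ * x j) - (if i = i0 then c ^ 2 / a * x0 else 0) := by
        intro i
        have hterm : ∀ j : Fin n, y' i j * x j
            = y i.succ j.succ * x j - (if j = i0 then (if i = i0 then c ^ 2 / a * x j else 0) else 0) := by
          intro j
          simp only [hy'_def, Matrix.of_apply, sub_mul]
          by_cases h1 : j = i0 <;> by_cases h2 : i = i0 <;> simp [h1, h2]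
        rw [Finset.sum_congr rfl (fun j _ => hterm j), Finset.sum_sub_distrib,
          Finset.sum_ite_eq' Finset.univ i0]
        simp [hx0]
      have hL : star x ⬝ᵥ y' *ᵥ x
          = (∑ i : Fin n, x i * ∑ j : Fin n, y i.succ j.succ * x j) - c ^ 2 / a * (x0 * x0) := by
        rw [hstar]
        simp only [dotProduct, mulVec]
        rw [Finset.sum_congr rfl (fun i _ => by rw [hrowsum i, mul_sub])]
        rw [Finset.sum_sub_distrib]
        congr 1
        rw [Finset.sum_congr rfl (fun i _ => by
          rw [show x i * (if i = i0 then c ^ 2 / a * x0 else 0)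
              = (if i = i0 then x i * (c ^ 2 / a * x0) else 0) from by
            by_cases h : i = i0 <;> simp [h]])]
        rw [Finset.sum_ite_eq' Finset.univ i0]
        simp only [Finset.mem_univ, if_true, hx0]
        ring
      have hinner0 : (∑ j : Fin (n+1), y z0 j * xt j) = a * t + c * x0 := by
        rw [Fin.sum_univ_succ, ← hz0]
        have e1 : ∀ j : Fin n, y z0 j.succ * xt j.succ = (if j = i0 then c * x j else 0) := by
          intro j
          rw [show xt j.succ = x j from by simp [hxt_def], hrow0 j]
          by_cases h : j = i0 <;> simp [h]
        rw [Finset.sum_congr rfl (fun j _ => e1 j), Finset.sum_ite_eq' Finset.univ i0]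
        simp only [Finset.mem_univ, if_true]
        rw [show xt z0 = t from rfl, ← ha_def, ← hx0]
      have hinnerS : ∀ i : Fin n, (∑ j : Fin (n+1), y i.succ j * xt j)
          = (if i = i0 then c else 0) * t + ∑ j : Fin n, y i.succ j.succ * x j := by
        intro i
        rw [Fin.sum_univ_succ, ← hz0, show xt z0 = t from rfl, hsymE i.succ z0, hrow0 i]
        simp [hxt_def]
      have hR : star xt ⬝ᵥ y *ᵥ xt
          = t * (a * t + c * x0) + (x0 * (c * t)
            + ∑ i : Fin n, x i * ∑ j : Fin n, y i.succ j.succ * x j) := by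
        rw [hstar]
        simp only [dotProduct, mulVec]
        rw [Fin.sum_univ_succ, ← hz0]
        congr 1
        · rw [show xt z0 = t from rfl, hinner0]
        · rw [Finset.sum_congr rfl (fun i _ => by
            rw [show xt i.succ = x i from by simp [hxt_def], hinnerS i, mul_add])]
          rw [Finset.sum_add_distrib]
          congr 1
          rw [Finset.sum_congr rfl (fun i _ => by
            rw [show x i * ((if i = i0 then c else 0) * t) = (if i = i0 then x i * (c * t) else 0) from by
              by_cases h : i = i0 <;> simp [h]])]
          rw [Finset.sum_ite_eq' Finset.univ i0]
          simp [hx0]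
      have key : star x ⬝ᵥ y' *ᵥ x = star xt ⬝ᵥ y *ᵥ xt := by
        rw [hL, hR, ht]
        field_simp
        ring
      rw [key]
      exact hpd.dotProduct_mulVec_pos hxt
  obtain ⟨T', hLU', htri', hfac'⟩ := IH y' hy'mem
  set T : Matrix (Fin (n+1)) (Fin (n+1)) ℝ :=
    Matrix.of (Fin.cons (Fin.cons (Real.sqrt a) (fun _ => 0))
      (fun i => Fin.cons (if i = i0 then c / Real.sqrt a else 0) (fun j => T' i j))) with hT_def
  have hT00 : T z0 z0 = Real.sqrt a := rfl
  have hT0s : ∀ j : Fin n, T z0 j.succ = 0 := fun j => by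
    show (Fin.cons (Real.sqrt a) (fun _ => (0:ℝ)) : Fin (n+1) → ℝ) j.succ = 0
    simp
  have hTs0 : ∀ i : Fin n, T i.succ z0 = (if i = i0 then c / Real.sqrt a else 0) := fun i => by
    show (Fin.cons (Fin.cons (Real.sqrt a) (fun _ => 0))
      (fun i => Fin.cons (if i = i0 then c / Real.sqrt a else 0) (fun j => T' i j)) :
        ∀ _ : Fin (n+1), Fin (n+1) → ℝ) i.succ z0 = _
    rw [Fin.cons_succ]
    rfl
  have hTss : ∀ i j : Fin n, T i.succ j.succ = T' i j := fun i j => by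
    show (Fin.cons (Fin.cons (Real.sqrt a) (fun _ => 0))
      (fun i => Fin.cons (if i = i0 then c / Real.sqrt a else 0) (fun j => T' i j)) :
        ∀ _ : Fin (n+1), Fin (n+1) → ℝ) i.succ j.succ = _
    rw [Fin.cons_succ, Fin.cons_succ]
  refine ⟨T, ?_, ?_, ?_⟩
  · -- IsLU
    intro i j hc
    induction i using Fin.cases with
    | zero =>
      induction j using Fin.cases with
      | zero =>
        exfalso
        simp only [hz0, Fin.val_zero] at hc
        omega
      | succ j => exact hT0s j
    | succ i =>
      induction j using Fin.cases with
      | zero =>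
        rw [hTs0]
        have : i ≠ i0 := by
          intro h
          subst h
          simp [Fin.val_succ, hi0] at hc
          omega
        simp [this]
      | succ j =>
        rw [hTss]
        apply hLU'
        simp only [Fin.val_succ] at hc
        omega
  · -- tridiagonal
    intro i j hc
    induction i using Fin.cases with
    | zero =>
      induction j using Fin.cases with
      | zero => simp at hc
      | succ j => exact hT0s j
    | succ i =>
      induction j using Fin.cases with
      | zero =>
        rw [hTs0]
        have : i ≠ i0 := by
          intro h
          subst h
          simp [Fin.val_succ, hi0] at hc
        simp [this]
      | succ j =>
        rw [hTss]
        apply htri'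
        simp only [Fin.val_succ] at hc
        omega
  · -- factorization
    ext i j
    rw [mul_apply]
    simp only [transpose_apply]
    rw [Fin.sum_univ_succ]
    induction i using Fin.cases with
    | zero =>
      induction j using Fin.cases with
      | zero =>
        simp only [← hz0, hT00, hT0s]
        simpa using hsq.symm
      | succ j =>
        simp only [← hz0, hT00, hT0s, hTs0, zero_mul, Finset.sum_const_zero, add_zero]
        rw [hrow0 j]
        by_cases h : j = i0
        · simp [h]
          field_simp
        · simp [h]
    | succ i =>
      induction j using Fin.cases with
      | zero =>
        simp only [← hz0, hT00, hT0s, hTs0, mul_zero, Finset.sum_const_zero, add_zero]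
        rw [hsymE i.succ z0, hrow0 i]
        by_cases h : i = i0
        · simp [h]
          field_simp
        · simp [h]
      | succ j =>
        simp only [← hz0, hTs0, hTss]
        have hprod : ∑ l : Fin n, T' i l * T' j l = y' i j := by
          have := congrFun (congrFun hfac' i) j
          rw [this, mul_apply]
          simp [transpose_apply]
        rw [hprod]
        simp only [hy'_def, Matrix.of_apply]
        by_cases h1 : i = i0 <;> by_cases h2 : j = i0 <;>
          simp [h1, h2]
        field_simp
        rw [Real.sq_sqrt ha.le]
        ring

lemma base1 (M : ℕ) (y : Matrix (Fin 1) (Fin 1) ℝ) (hy : y ∈ PG 1) :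
    ∃ T : Matrix (Fin 1) (Fin 1) ℝ, IsLU 1 M T ∧
      (∀ i j : Fin 1, ((i : ℕ) + 1 < (j : ℕ) ∨ (j : ℕ) + 1 < (i : ℕ)) → T i j = 0) ∧
      y = T * Tᵀ := by
  have ha : 0 < y 0 0 := by
    have hne : (Pi.single (0 : Fin 1) 1 : Fin 1 → ℝ) ≠ 0 := by
      intro h
      have := congrFun h 0
      simp [Pi.single_apply] at this
    have := hy.2.dotProduct_mulVec_pos hne
    simpa [dotProduct, mulVec, Pi.single_apply, Finset.mul_sum, mul_comm] using this
  refine ⟨fun _ _ => Real.sqrt (y 0 0), ?_, ?_, ?_⟩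
  · intro i j hc
    have hi := i.isLt; have hj := j.isLt
    omega
  · intro i j hc
    have hi := i.isLt; have hj := j.isLt
    omega
  · ext i j
    rw [Subsingleton.elim i 0, Subsingleton.elim j 0]
    erw [mul_apply]
    show y 0 0 = ∑ _k : Fin 1, Real.sqrt (y 0 0) * Real.sqrt (y 0 0)
    simp [Real.mul_self_sqrt ha.le]

lemma key (n : ℕ) : ∀ M : ℕ, 1 ≤ M → M ≤ n → ∀ y ∈ PG n,
    ∃ T : Matrix (Fin n) (Fin n) ℝ, IsLU n M T ∧
      (∀ i j : Fin n, ((i : ℕ) + 1 < (j : ℕ) ∨ (j : ℕ) + 1 < (i : ℕ)) → T i j = 0) ∧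
      y = T * Tᵀ := by
  induction n with
  | zero => intro M h1 h2; omega
  | succ n IH =>
    intro M hM1 hMn y hy
    rcases Nat.eq_zero_or_pos n with rfl | hn
    · exact base1 M y hy
    · by_cases hM2 : 2 ≤ M
      · exact peel n M hn hM2 hMn (fun y' hy' => IH (M - 1) (by omega) (by omega) y' hy') y hy
      · have hM1' : M = 1 := by omega
        subst hM1'
        apply revTransfer (n + 1) 1 (by omega) (by omega) y
        have := peel n (n + 1) hn (by omega) (by omega)
          (fun y' hy' => IH n (by omega) (by omega) y' hy')
          (y.submatrix Fin.rev Fin.rev) (revPG (n + 1) y hy)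
        simpa using this


/-- Every `y ∈ P_{A_n}` admits a factorization `y = T Tᵀ` with `T` an LU(M)-triangular
matrix satisfying `T_{ij} = 0` whenever `|i - j| > 1`. -/
theorem stmt17 (n : ℕ) (hn : 1 ≤ n) (M : ℕ) (hM1 : 1 ≤ M) (hMn : M ≤ n)
    (y : Matrix (Fin n) (Fin n) ℝ) (hy : y ∈ PG n) :
    ∃ T : Matrix (Fin n) (Fin n) ℝ, IsLU n M T ∧
      (∀ i j : Fin n, ((i : ℕ) + 1 < (j : ℕ) ∨ (j : ℕ) + 1 < (i : ℕ)) → T i j = 0) ∧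
      y = T * Tᵀ := key n M hM1 hMn y hy
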